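/- Let M : [0,∞) → ℝ^{n×n} be C¹ with M(t) symmetric and αI ⪯ M(t) ⪯ βI for all t ≥ 0 and some constants 0 < α ≤ β; let C : [0,∞) → ℝ^{n×n} be continuous and bounded with d/dt M(t) − 2C(t) skew-symmetric for every t; let Y : [0,∞) → ℝ^{n×p} be continuous and bounded; let K ∈ ℝ^{n×n} be symmetric positive definite and Γ ∈ ℝ^{p×p} be diagonal with positive diagonal entries. Suppose s : [0,∞) → ℝ^n and θ̃ : [0,∞) → ℝ^p are C¹ and satisfy M(t)s'(t) = −C(t)s(t) − K s(t) + Y(t)θ̃(t) and θ̃'(t) = −Γ Y(t)^T s(t) for all t ≥ 0. Then s and θ̃ are bounded on [0,∞) and s(t) → 0 as t → ∞. -/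

import Mathlib

open Matrix Filter

/-- Action of a real `k × l` matrix on a Euclidean vector. -/
noncomputable def mApply {k l : ℕ} (A : Matrix (Fin k) (Fin l) ℝ)
    (x : EuclideanSpace ℝ (Fin l)) : EuclideanSpace ℝ (Fin k) :=
  (EuclideanSpace.equiv (Fin k) ℝ).symm (A.mulVec (EuclideanSpace.equiv (Fin l) ℝ x))

lemma mApply_apply {k l : ℕ} (A : Matrix (Fin k) (Fin l) ℝ)
    (x : EuclideanSpace ℝ (Fin l)) (i : Fin k) :
    mApply A x i = ∑ j, A i j * x j := by
  simp [mApply, Matrix.mulVec, dotProduct]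

lemma abs_coord_le_norm {k : ℕ} (x : EuclideanSpace ℝ (Fin k)) (i : Fin k) :
    |x i| ≤ ‖x‖ := by
  have := EuclideanSpace.norm_eq x
  rw [this]
  have h1 : |x i| = Real.sqrt (‖x i‖^2) := by
    rw [Real.sqrt_sq_eq_abs]; simp
  rw [h1]
  apply Real.sqrt_le_sqrt
  exact Finset.single_le_sum (f := fun j => ‖x j‖^2) (fun j _ => sq_nonneg _) (Finset.mem_univ i)

lemma norm_mApply_le {k l : ℕ} (A : Matrix (Fin k) (Fin l) ℝ) (c : ℝ) (hc : 0 ≤ c)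
    (hA : ∀ i j, |A i j| ≤ c) (x : EuclideanSpace ℝ (Fin l)) :
    ‖mApply A x‖ ≤ (k * l * c) * ‖x‖ := by
  have hcomp : ∀ i, |mApply A x i| ≤ (l * c) * ‖x‖ := by
    intro i
    rw [mApply_apply]
    calc |∑ j, A i j * x j| ≤ ∑ j, |A i j * x j| := Finset.abs_sum_le_sum_abs _ _
      _ ≤ ∑ j : Fin l, c * ‖x‖ := by
          apply Finset.sum_le_sum
          intro j _
          rw [abs_mul]
          exact mul_le_mul (hA i j) (abs_coord_le_norm x j) (abs_nonneg _)
            hc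
      _ = (l * c) * ‖x‖ := by simp [Finset.sum_const]; ring
  have h0 : (0:ℝ) ≤ (l * c) * ‖x‖ := by positivity
  rw [EuclideanSpace.norm_eq]
  calc Real.sqrt (∑ i, ‖mApply A x i‖^2) ≤ Real.sqrt (∑ i : Fin k, ((l * c) * ‖x‖)^2) := by
        apply Real.sqrt_le_sqrt
        apply Finset.sum_le_sum
        intro i _
        have := hcomp i
        rw [Real.norm_eq_abs]
        exact pow_le_pow_left₀ (abs_nonneg _) this 2
    _ = Real.sqrt (k * ((l * c) * ‖x‖)^2) := by simp [Finset.sum_const]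
    _ ≤ Real.sqrt ((k:ℝ)^2 * ((l * c) * ‖x‖)^2) := by
        apply Real.sqrt_le_sqrt
        apply mul_le_mul_of_nonneg_right _ (sq_nonneg _)
        exact_mod_cast Nat.le_self_pow two_ne_zero k
    _ = (k : ℝ) * ((l * c) * ‖x‖) := by
        rw [← mul_pow, Real.sqrt_sq (by positivity)]
    _ = (k * l * c) * ‖x‖ := by ring

/-- If `g` has derivative `≤ m` on `[a,b]` then `g b ≤ g a + m * (b - a)`. -/
lemma le_of_deriv_le {g g' : ℝ → ℝ} {a b m : ℝ} (hab : a ≤ b)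
    (hg : ∀ t ∈ Set.Icc a b, HasDerivAt g (g' t) t)
    (hle : ∀ t ∈ Set.Icc a b, g' t ≤ m) :
    g b ≤ g a + m * (b - a) := by
  have h : AntitoneOn (fun t => g t - m * t) (Set.Icc a b) := by
    apply antitoneOn_of_deriv_nonpos (convex_Icc a b)
    · exact ContinuousOn.sub
        (fun t ht => ((hg t ht).continuousAt).continuousWithinAt)
        (by fun_prop)
    · intro t ht
      rw [interior_Icc] at ht
      exact (((hg t (Set.mem_Icc_of_Ioo ht)).sub
        ((hasDerivAt_id t).const_mul m)).differentiableAt).differentiableWithinAt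
    · intro t ht
      rw [interior_Icc] at ht
      have hd := (hg t (Set.mem_Icc_of_Ioo ht)).sub
        (((hasDerivAt_id t).const_mul m))
      simp only [mul_one, id_eq] at hd
      rw [show deriv (fun t => g t - m * t) t = g' t - m from hd.deriv]
      have := hle t (Set.mem_Icc_of_Ioo ht)
      linarith
  have := h (Set.left_mem_Icc.2 hab) (Set.right_mem_Icc.2 hab) hab
  simp only at this
  linarith

lemma quad_eq_dot {k : ℕ} (K : Matrix (Fin k) (Fin k) ℝ) (y : Fin k → ℝ) :
    ∑ i, ∑ j, y i * K i j * y j = dotProduct y (K *ᵥ y) := by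
  simp only [dotProduct, Matrix.mulVec, Finset.mul_sum]
  apply Finset.sum_congr rfl; intro i _
  apply Finset.sum_congr rfl; intro j _
  ring

lemma posdef_quad_lower {k : ℕ} {K : Matrix (Fin k) (Fin k) ℝ} (hK : K.PosDef) :
    ∃ lam > 0, ∀ x : EuclideanSpace ℝ (Fin k),
      lam * ‖x‖^2 ≤ ∑ i, ∑ j, x i * K i j * x j := by
  set φ : EuclideanSpace ℝ (Fin k) → ℝ := fun x => ∑ i, ∑ j, x i * K i j * x j with hφ
  have hφc : Continuous φ := by
    apply continuous_finset_sum; intro i _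
    apply continuous_finset_sum; intro j _
    exact (((EuclideanSpace.proj i).continuous.mul continuous_const).mul
      (EuclideanSpace.proj j).continuous)
  have hpos : ∀ x : EuclideanSpace ℝ (Fin k), x ≠ 0 → 0 < φ x := by
    intro x hx
    have h2 := hK.dotProduct_mulVec_pos (x := fun i => x i) (by
      intro hc
      apply hx
      ext i
      exact congrFun hc i)
    rw [hφ]
    simp only [star_trivial] at h2
    calc (0:ℝ) < dotProduct (fun i => x i) (K *ᵥ fun i => x i) := h2
      _ = ∑ i, ∑ j, x i * K i j * x j := (quad_eq_dot K fun i => x i).symm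
  have hhom : ∀ (c : ℝ) (x : EuclideanSpace ℝ (Fin k)), φ (c • x) = c^2 * φ x := by
    intro c x
    rw [hφ]
    simp only [PiLp.smul_apply, smul_eq_mul, Finset.mul_sum]
    apply Finset.sum_congr rfl; intro i _
    apply Finset.sum_congr rfl; intro j _
    ring
  rcases Nat.eq_zero_or_pos k with hk | hk
  · refine ⟨1, one_pos, ?_⟩
    subst hk
    intro x
    have : x = 0 := Subsingleton.elim x 0
    simp [this]
  · have x₀ : EuclideanSpace ℝ (Fin k) := EuclideanSpace.single ⟨0, hk⟩ (1:ℝ)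
    have hx₀ : ‖(EuclideanSpace.single ⟨0, hk⟩ (1:ℝ) : EuclideanSpace ℝ (Fin k))‖ = 1 := by
      rw [EuclideanSpace.norm_single]; norm_num
    have hS : (Metric.sphere (0 : EuclideanSpace ℝ (Fin k)) 1).Nonempty :=
      ⟨_, by rwa [mem_sphere_zero_iff_norm]⟩
    obtain ⟨z, hzS, hzmin⟩ := (isCompact_sphere (0 : EuclideanSpace ℝ (Fin k)) 1).exists_isMinOn
      hS hφc.continuousOn
    rw [mem_sphere_zero_iff_norm] at hzS
    have hz0 : z ≠ 0 := by intro h; rw [h, norm_zero] at hzS; norm_num at hzS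
    refine ⟨φ z, hpos z hz0, ?_⟩
    intro x
    rcases eq_or_ne x 0 with rfl | hx
    · simp [hφ]
    · have hr : 0 < ‖x‖ := norm_pos_iff.2 hx
      have hu : ‖(‖x‖⁻¹ • x : EuclideanSpace ℝ (Fin k))‖ = 1 := by
        rw [norm_smul]
        simp [abs_of_pos (inv_pos.2 hr), inv_mul_cancel₀ (ne_of_gt hr)]
      have hmin := hzmin (mem_sphere_zero_iff_norm.2 hu)
      have heq : φ (‖x‖⁻¹ • x) = (‖x‖)⁻¹^2 * φ x := hhom _ x
      have : φ z ≤ (‖x‖)⁻¹^2 * φ x := by rw [← heq]; exact hmin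
      have h2 : φ z * ‖x‖^2 ≤ φ x := by
        have := mul_le_mul_of_nonneg_right this (sq_nonneg ‖x‖)
        calc φ z * ‖x‖^2 ≤ ((‖x‖)⁻¹^2 * φ x) * ‖x‖^2 := this
          _ = φ x := by field_simp
      linarith [h2]

lemma norm_sq_eq {k : ℕ} (x : EuclideanSpace ℝ (Fin k)) : ‖x‖^2 = ∑ i, x i * x i := by
  rw [EuclideanSpace.norm_eq, Real.sq_sqrt (Finset.sum_nonneg fun i _ => sq_nonneg _)]
  apply Finset.sum_congr rfl; intro i _
  rw [Real.norm_eq_abs, sq_abs, sq]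

lemma quad_lower_of_shift {k : ℕ} {A : Matrix (Fin k) (Fin k) ℝ} {a : ℝ}
    (h : (A - a • (1 : Matrix (Fin k) (Fin k) ℝ)).PosSemidef) (x : EuclideanSpace ℝ (Fin k)) :
    a * ‖x‖^2 ≤ ∑ i, ∑ j, x i * A i j * x j := by
  have h2 := h.dotProduct_mulVec_nonneg (fun i => x i)
  simp only [star_trivial, Matrix.sub_mulVec, Matrix.smul_mulVec, Matrix.one_mulVec,
    dotProduct_sub, dotProduct_smul, smul_eq_mul] at h2
  rw [← quad_eq_dot] at h2
  have hd : dotProduct (fun i => x i) (fun i => x i) = ‖x‖^2 := by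
    rw [norm_sq_eq]; rfl
  rw [hd] at h2
  linarith

lemma sum_mul_le_norm {k : ℕ} (x y : EuclideanSpace ℝ (Fin k)) :
    |∑ i, x i * y i| ≤ ‖x‖ * ‖y‖ := by
  have h : (inner ℝ x y : ℝ) = ∑ i, x i * y i := by
    rw [PiLp.inner_apply]
    apply Finset.sum_congr rfl; intro i _
    simp [RCLike.inner_apply, mul_comm]
  rw [← h]
  exact abs_real_inner_le_norm x y

set_option maxHeartbeats 2000000 in
/-- closed-loop adaptive stability for the Euler–Lagrange error dynamics
`M(t)ṡ = −C(t)s − Ks + Y(t)θ̃`, `θ̃̇ = −ΓY(t)ᵀs`, where `M` is `C¹`, symmetric with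
`αI ⪯ M(t) ⪯ βI`, `Ṁ − 2C` is skew-symmetric, `C` and `Y` are continuous and bounded,
`K` is symmetric positive definite and `Γ` is diagonal with positive diagonal entries.
Then `s` and `θ̃` are bounded on `[0,∞)` and `s(t) → 0` as `t → ∞`. -/
theorem stmt_11 (n p : ℕ)
    (M M' : ℝ → Matrix (Fin n) (Fin n) ℝ)
    (hM' : ∀ t, 0 ≤ t → ∀ i j, HasDerivAt (fun u => M u i j) (M' t i j) t)
    (hM'c : ∀ i j, ContinuousOn (fun t => M' t i j) (Set.Ici (0 : ℝ)))
    (hMsymm : ∀ t, 0 ≤ t → (M t).IsSymm)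
    (α β : ℝ) (hα : 0 < α) (hαβ : α ≤ β)
    (hMl : ∀ t, 0 ≤ t → (M t - α • (1 : Matrix (Fin n) (Fin n) ℝ)).PosSemidef)
    (hMu : ∀ t, 0 ≤ t → (β • (1 : Matrix (Fin n) (Fin n) ℝ) - M t).PosSemidef)
    (C : ℝ → Matrix (Fin n) (Fin n) ℝ)
    (hCc : ∀ i j, Continuous fun t => C t i j)
    (hCb : ∃ c, ∀ t, 0 ≤ t → ∀ i j, |C t i j| ≤ c)
    (hskew : ∀ t, 0 ≤ t →
      (M' t - (2 : ℝ) • C t)ᵀ = -(M' t - (2 : ℝ) • C t))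
    (Y : ℝ → Matrix (Fin n) (Fin p) ℝ)
    (hYc : ∀ i j, Continuous fun t => Y t i j)
    (hYb : ∃ c, ∀ t, 0 ≤ t → ∀ i j, |Y t i j| ≤ c)
    (K : Matrix (Fin n) (Fin n) ℝ) (hK : K.PosDef)
    (Γ : Matrix (Fin p) (Fin p) ℝ) (hΓd : Γ.IsDiag) (hΓpos : ∀ i, 0 < Γ i i)
    (s s' : ℝ → EuclideanSpace ℝ (Fin n)) (θ θ' : ℝ → EuclideanSpace ℝ (Fin p))
    (hs : ∀ t, 0 ≤ t → HasDerivAt s (s' t) t)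
    (hθ : ∀ t, 0 ≤ t → HasDerivAt θ (θ' t) t)
    (hs'c : ContinuousOn s' (Set.Ici (0 : ℝ)))
    (hθ'c : ContinuousOn θ' (Set.Ici (0 : ℝ)))
    (heq1 : ∀ t, 0 ≤ t →
      mApply (M t) (s' t) = -mApply (C t) (s t) - mApply K (s t) + mApply (Y t) (θ t))
    (heq2 : ∀ t, 0 ≤ t → θ' t = -mApply Γ (mApply (Y t)ᵀ (s t))) :
    (∃ c, ∀ t, 0 ≤ t → ‖s t‖ ≤ c) ∧ (∃ c, ∀ t, 0 ≤ t → ‖θ t‖ ≤ c) ∧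
      Tendsto s atTop (nhds 0) := by
  classical
  obtain ⟨cC, hcC⟩ := hCb
  obtain ⟨cY, hcY⟩ := hYb
  obtain ⟨lam, hlam, hlamK⟩ := posdef_quad_lower hK
  -- bound for Γ diagonal entries
  obtain ⟨gmax, hgmax⟩ : ∃ g : ℝ, g = (∑ i, Γ i i) + 1 := ⟨_, rfl⟩
  have hgmax1 : ∀ i, Γ i i ≤ gmax := by
    intro i
    have := Finset.single_le_sum (f := fun i => Γ i i)
      (fun j _ => le_of_lt (hΓpos j)) (Finset.mem_univ i)
    simp only [hgmax]; linarith
  have hgmaxpos : 0 < gmax := by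
    have : 0 ≤ ∑ i, Γ i i := Finset.sum_nonneg fun j _ => le_of_lt (hΓpos j)
    simp only [hgmax]; linarith
  -- component derivatives
  have hcs : ∀ (i : Fin n) t, 0 ≤ t → HasDerivAt (fun u => s u i) (s' t i) t := by
    intro i t ht
    exact (EuclideanSpace.proj (𝕜 := ℝ) i).hasFDerivAt.comp_hasDerivAt t (hs t ht)
  have hcθ : ∀ (i : Fin p) t, 0 ≤ t → HasDerivAt (fun u => θ u i) (θ' t i) t := by
    intro i t ht
    exact (EuclideanSpace.proj (𝕜 := ℝ) i).hasFDerivAt.comp_hasDerivAt t (hθ t ht)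
  -- Lyapunov function and its derivative
  obtain ⟨V, hV⟩ : ∃ V : ℝ → ℝ, V = fun t => (∑ i, ∑ j, s t i * M t i j * s t j)
      + ∑ i, θ t i * (Γ i i)⁻¹ * θ t i := ⟨_, rfl⟩
  obtain ⟨W, hW⟩ : ∃ W : ℝ → ℝ, W = fun t => -2 * ∑ i, ∑ j, s t i * K i j * s t j := ⟨_, rfl⟩
  have key : ∀ t, 0 ≤ t →
      (∑ i, ∑ j, (s' t i * M t i j * s t j + s t i * M' t i j * s t j
        + s t i * M t i j * s' t j))
      + ∑ i, (θ' t i * (Γ i i)⁻¹ * θ t i + θ t i * (Γ i i)⁻¹ * θ' t i) = W t := by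
    intro t ht
    have h1 : ∀ i, ∑ j, M t i j * s' t j
        = -(∑ j, C t i j * s t j) - (∑ j, K i j * s t j) + ∑ j, Y t i j * θ t j := by
      intro i
      have h := congrArg (fun v : EuclideanSpace ℝ (Fin n) => v i) (heq1 t ht)
      simpa [mApply_apply] using h
    have h2 : ∀ i, θ' t i = -(Γ i i * ∑ k, Y t k i * s t k) := by
      intro i
      have h := congrArg (fun v : EuclideanSpace ℝ (Fin p) => v i) (heq2 t ht)
      simp only [mApply_apply] at h
      rw [PiLp.neg_apply, mApply_apply] at h
      rw [h]
      congr 1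
      rw [Finset.sum_eq_single i]
      · simp [mApply_apply, Matrix.transpose_apply]
      · intro b _ hb
        rw [hΓd (Ne.symm hb), zero_mul]
      · intro hni
        exact absurd (Finset.mem_univ i) hni
    have hsy : ∀ i j, M t i j = M t j i := by
      intro i j
      have h := hMsymm t ht
      rw [Matrix.IsSymm] at h
      have := congrFun (congrFun h j) i
      simpa using this
    have hsk : ∀ i j, M' t j i - 2 * C t j i = -(M' t i j - 2 * C t i j) := by
      intro i j
      have h := congrFun (congrFun (hskew t ht) i) j
      simpa [Matrix.transpose_apply, Matrix.sub_apply, Matrix.smul_apply, smul_eq_mul,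
        Matrix.neg_apply] using h
    have eA : (∑ i, ∑ j, s' t i * M t i j * s t j) = ∑ i, ∑ j, s t i * M t i j * s' t j := by
      rw [Finset.sum_comm]
      apply Finset.sum_congr rfl; intro i _
      apply Finset.sum_congr rfl; intro j _
      rw [hsy j i]
      ring
    have e1 : (∑ i, ∑ j, s t i * M t i j * s' t j)
        = -(∑ i, ∑ j, s t i * C t i j * s t j) - (∑ i, ∑ j, s t i * K i j * s t j)
          + ∑ i, ∑ j, s t i * Y t i j * θ t j := by
      have hrow : ∀ i, ∑ j, s t i * M t i j * s' t j
          = -(∑ j, s t i * C t i j * s t j) - (∑ j, s t i * K i j * s t j)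
            + ∑ j, s t i * Y t i j * θ t j := by
        intro i
        rw [show (∑ j, s t i * M t i j * s' t j) = s t i * ∑ j, M t i j * s' t j from by
          rw [Finset.mul_sum]; exact Finset.sum_congr rfl fun j _ => by ring]
        rw [h1 i]
        simp only [mul_add, mul_sub, mul_neg, Finset.mul_sum, ← mul_assoc]
      calc (∑ i, ∑ j, s t i * M t i j * s' t j)
          = ∑ i, (-(∑ j, s t i * C t i j * s t j) - (∑ j, s t i * K i j * s t j)
            + ∑ j, s t i * Y t i j * θ t j) := Finset.sum_congr rfl fun i _ => hrow i
        _ = _ := by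
            rw [Finset.sum_add_distrib, Finset.sum_sub_distrib, Finset.sum_neg_distrib]
    have e2 : (∑ i, ∑ j, s t i * M' t i j * s t j)
        = 2 * ∑ i, ∑ j, s t i * C t i j * s t j := by
      have hX0 : (∑ i, ∑ j, s t i * (M' t i j - 2 * C t i j) * s t j) = 0 := by
        have hneg : (∑ i, ∑ j, s t i * (M' t i j - 2 * C t i j) * s t j)
            = -(∑ i, ∑ j, s t i * (M' t i j - 2 * C t i j) * s t j) := by
          conv_lhs => rw [Finset.sum_comm]
          rw [← Finset.sum_neg_distrib]
          apply Finset.sum_congr rfl; intro i _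
          rw [← Finset.sum_neg_distrib]
          apply Finset.sum_congr rfl; intro j _
          rw [hsk i j]
          ring
        linarith
      calc ∑ i, ∑ j, s t i * M' t i j * s t j
          = ∑ i, ∑ j, (s t i * (M' t i j - 2*C t i j) * s t j
              + 2*(s t i * C t i j * s t j)) := by
            apply Finset.sum_congr rfl; intro i _
            apply Finset.sum_congr rfl; intro j _
            ring
        _ = (∑ i, ∑ j, s t i * (M' t i j - 2*C t i j) * s t j)
            + ∑ i, ∑ j, 2*(s t i * C t i j * s t j) := by
            rw [← Finset.sum_add_distrib]
            apply Finset.sum_congr rfl; intro i _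
            rw [Finset.sum_add_distrib]
        _ = 2 * ∑ i, ∑ j, s t i * C t i j * s t j := by
            rw [hX0, zero_add, Finset.mul_sum]
            apply Finset.sum_congr rfl; intro i _
            rw [Finset.mul_sum]
    have e3 : (∑ i, (θ' t i * (Γ i i)⁻¹ * θ t i + θ t i * (Γ i i)⁻¹ * θ' t i))
        = -2 * ∑ i, ∑ j, s t i * Y t i j * θ t j := by
      calc ∑ i, (θ' t i * (Γ i i)⁻¹ * θ t i + θ t i * (Γ i i)⁻¹ * θ' t i)
          = ∑ i, -2 * (θ t i * ∑ k, Y t k i * s t k) := by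
            apply Finset.sum_congr rfl; intro i _
            rw [h2 i]
            have hg : (Γ i i)⁻¹ * Γ i i = 1 := inv_mul_cancel₀ (ne_of_gt (hΓpos i))
            linear_combination (-2 * θ t i * (∑ k, Y t k i * s t k)) * hg
        _ = -2 * ∑ i, θ t i * ∑ k, Y t k i * s t k := by rw [Finset.mul_sum]
        _ = -2 * ∑ i, ∑ j, s t i * Y t i j * θ t j := by
            congr 1
            calc ∑ i, θ t i * ∑ k, Y t k i * s t k
                = ∑ i, ∑ k, θ t i * (Y t k i * s t k) := by
                  apply Finset.sum_congr rfl; intro i _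
                  rw [Finset.mul_sum]
              _ = ∑ k, ∑ i, θ t i * (Y t k i * s t k) := Finset.sum_comm
              _ = ∑ k, ∑ i, s t k * Y t k i * θ t i := by
                  apply Finset.sum_congr rfl; intro k _
                  apply Finset.sum_congr rfl; intro i _
                  ring
    have esplit : ∑ i, ∑ j, (s' t i * M t i j * s t j + s t i * M' t i j * s t j
          + s t i * M t i j * s' t j)
        = (∑ i, ∑ j, s' t i * M t i j * s t j) + (∑ i, ∑ j, s t i * M' t i j * s t j)
          + (∑ i, ∑ j, s t i * M t i j * s' t j) := by
      rw [← Finset.sum_add_distrib, ← Finset.sum_add_distrib]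
      apply Finset.sum_congr rfl; intro i _
      rw [← Finset.sum_add_distrib, ← Finset.sum_add_distrib]
    simp only [hW]
    rw [esplit, eA, e1, e2, e3]
    ring
  have hVd : ∀ t, 0 ≤ t → HasDerivAt V (W t) t := by
    intro t ht
    rw [← key t ht, hV]
    apply HasDerivAt.add
    · apply HasDerivAt.fun_sum
      intro i _
      apply HasDerivAt.fun_sum
      intro j _
      have h := ((hcs i t ht).mul (hM' t ht i j)).mul (hcs j t ht)
      refine h.congr_deriv ?_
      simp only [Pi.mul_apply]; ring
    · apply HasDerivAt.fun_sum
      intro i _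
      have h := ((hcθ i t ht).mul_const ((Γ i i)⁻¹)).mul (hcθ i t ht)
      refine h.congr_deriv ?_
      all_goals ring
  -- quadratic form in K is nonnegative and dominates lam * ‖s‖²
  have hSK : ∀ t, lam * ‖s t‖^2 ≤ ∑ i, ∑ j, s t i * K i j * s t j := fun t => hlamK (s t)
  have hWle : ∀ t, W t ≤ 0 := by
    intro t
    have h1 := hSK t
    have h2 : (0:ℝ) ≤ lam * ‖s t‖^2 := by positivity
    simp only [hW]
    nlinarith
  -- V is non-increasing on [0, ∞)
  have hVle : ∀ a b, 0 ≤ a → a ≤ b → V b ≤ V a := by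
    intro a b ha hab
    have := le_of_deriv_le (g := V) (g' := W) (m := 0) hab
      (fun t htt => hVd t (le_trans ha htt.1)) (fun t _ => hWle t)
    linarith
  -- lower bounds for V
  have hVs : ∀ t, 0 ≤ t → α * ‖s t‖^2 ≤ V t := by
    intro t ht
    have h1 := quad_lower_of_shift (hMl t ht) (s t)
    have h2 : (0:ℝ) ≤ ∑ i, θ t i * (Γ i i)⁻¹ * θ t i := by
      apply Finset.sum_nonneg
      intro i _
      have hg : (0:ℝ) ≤ (Γ i i)⁻¹ := le_of_lt (inv_pos.2 (hΓpos i))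
      nlinarith [sq_nonneg (θ t i)]
    simp only [hV]
    linarith
  have hVθ : ∀ t, 0 ≤ t → gmax⁻¹ * ‖θ t‖^2 ≤ V t := by
    intro t ht
    have h1 := quad_lower_of_shift (hMl t ht) (s t)
    have h1' : (0:ℝ) ≤ α * ‖s t‖^2 := by positivity
    have h2 : gmax⁻¹ * ‖θ t‖^2 ≤ ∑ i, θ t i * (Γ i i)⁻¹ * θ t i := by
      rw [norm_sq_eq, Finset.mul_sum]
      apply Finset.sum_le_sum
      intro i _
      have hgi : gmax⁻¹ ≤ (Γ i i)⁻¹ := by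
        apply inv_anti₀ (hΓpos i) (hgmax1 i)
      nlinarith [sq_nonneg (θ t i), inv_pos.2 (hΓpos i), inv_pos.2 hgmaxpos]
    simp only [hV]
    linarith
  have hV0 : ∀ t, 0 ≤ t → 0 ≤ V t := by
    intro t ht
    have := hVs t ht
    nlinarith [norm_nonneg (s t)]
  -- boundedness of s and θ
  obtain ⟨Bs, hBsdef⟩ : ∃ b : ℝ, b = Real.sqrt (V 0 / α) := ⟨_, rfl⟩
  have hBs : ∀ t, 0 ≤ t → ‖s t‖ ≤ Bs := by
    intro t ht
    have h1 := hVs t ht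
    have h2 := hVle 0 t le_rfl ht
    rw [hBsdef, show ‖s t‖ = Real.sqrt (‖s t‖^2) by rw [Real.sqrt_sq (norm_nonneg _)]]
    apply Real.sqrt_le_sqrt
    rw [le_div_iff₀ hα]
    nlinarith
  obtain ⟨Bθ, hBθdef⟩ : ∃ b : ℝ, b = Real.sqrt (gmax * V 0) := ⟨_, rfl⟩
  have hBθ : ∀ t, 0 ≤ t → ‖θ t‖ ≤ Bθ := by
    intro t ht
    have h1 := hVθ t ht
    have h2 := hVle 0 t le_rfl ht
    rw [hBθdef, show ‖θ t‖ = Real.sqrt (‖θ t‖^2) by rw [Real.sqrt_sq (norm_nonneg _)]]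
    apply Real.sqrt_le_sqrt
    calc ‖θ t‖^2 = gmax * (gmax⁻¹ * ‖θ t‖^2) := by
          field_simp
      _ ≤ gmax * V 0 := by
          have h3 := le_trans h1 h2
          exact mul_le_mul_of_nonneg_left h3 (le_of_lt hgmaxpos)
  have hBsnn : 0 ≤ Bs := hBsdef ▸ Real.sqrt_nonneg _
  have hBθnn : 0 ≤ Bθ := hBθdef ▸ Real.sqrt_nonneg _
  -- bound on s'
  have hs'bound : ∃ B', 0 ≤ B' ∧ ∀ t, 0 ≤ t → ‖s' t‖ ≤ B' := by
    obtain ⟨cK, hcKnn, hcK⟩ : ∃ c : ℝ, 0 ≤ c ∧ ∀ i j, |K i j| ≤ c := by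
      refine ⟨∑ i, ∑ j, |K i j|, by positivity, ?_⟩
      intro i j
      calc |K i j| ≤ ∑ j', |K i j'| :=
            Finset.single_le_sum (f := fun j' => |K i j'|) (fun j' _ => abs_nonneg _) (Finset.mem_univ j)
        _ ≤ ∑ i', ∑ j', |K i' j'| :=
            Finset.single_le_sum (f := fun i' => ∑ j', |K i' j'|)
              (fun i' _ => Finset.sum_nonneg fun j' _ => abs_nonneg _) (Finset.mem_univ i)
    obtain ⟨R, hR⟩ : ∃ R : ℝ,
        R = (n*n*(max cC 0))*Bs + (n*n*cK)*Bs + (n*p*(max cY 0))*Bθ := ⟨_, rfl⟩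
    have hRnn : 0 ≤ R := by rw [hR]; positivity
    refine ⟨R / α, by positivity, ?_⟩
    intro t ht
    have hMs' : ‖mApply (M t) (s' t)‖ ≤ R := by
      rw [heq1 t ht, hR]
      have h1 : ‖mApply (C t) (s t)‖ ≤ (n*n*(max cC 0)) * ‖s t‖ :=
        norm_mApply_le _ _ (le_max_right _ _)
          (fun i j => le_trans (hcC t ht i j) (le_max_left _ _)) _
      have h2 : ‖mApply K (s t)‖ ≤ (n*n*cK) * ‖s t‖ := norm_mApply_le _ _ hcKnn hcK _
      have h3 : ‖mApply (Y t) (θ t)‖ ≤ (n*p*(max cY 0)) * ‖θ t‖ :=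
        norm_mApply_le _ _ (le_max_right _ _)
          (fun i j => le_trans (hcY t ht i j) (le_max_left _ _)) _
      have htri : ‖-mApply (C t) (s t) - mApply K (s t) + mApply (Y t) (θ t)‖
          ≤ ‖mApply (C t) (s t)‖ + ‖mApply K (s t)‖ + ‖mApply (Y t) (θ t)‖ := by
        calc ‖-mApply (C t) (s t) - mApply K (s t) + mApply (Y t) (θ t)‖
            ≤ ‖-mApply (C t) (s t) - mApply K (s t)‖ + ‖mApply (Y t) (θ t)‖ :=
              norm_add_le _ _
          _ ≤ ‖-mApply (C t) (s t)‖ + ‖mApply K (s t)‖ + ‖mApply (Y t) (θ t)‖ := by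
              linarith [norm_sub_le (-mApply (C t) (s t)) (mApply K (s t))]
          _ = ‖mApply (C t) (s t)‖ + ‖mApply K (s t)‖ + ‖mApply (Y t) (θ t)‖ := by
              rw [norm_neg]
      have hss := hBs t ht
      have hθθ := hBθ t ht
      have e1 : (n*n*(max cC 0 : ℝ)) * ‖s t‖ ≤ (n*n*(max cC 0)) * Bs :=
        mul_le_mul_of_nonneg_left hss (by positivity)
      have e2 : ((n:ℝ)*n*cK) * ‖s t‖ ≤ (n*n*cK) * Bs :=
        mul_le_mul_of_nonneg_left hss (by positivity)
      have e3 : ((n:ℝ)*p*(max cY 0)) * ‖θ t‖ ≤ (n*p*(max cY 0)) * Bθ :=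
        mul_le_mul_of_nonneg_left hθθ (by positivity)
      linarith
    have hquad := quad_lower_of_shift (hMl t ht) (s' t)
    have heqq : ∑ i, ∑ j, s' t i * M t i j * s' t j
        = ∑ i, s' t i * (mApply (M t) (s' t)) i := by
      apply Finset.sum_congr rfl; intro i _
      rw [mApply_apply, Finset.mul_sum]
      apply Finset.sum_congr rfl; intro j _
      ring
    have hcs2 : ∑ i, s' t i * (mApply (M t) (s' t)) i
        ≤ ‖s' t‖ * ‖mApply (M t) (s' t)‖ :=
      le_trans (le_abs_self _) (sum_mul_le_norm _ _)
    have hfin : α * ‖s' t‖^2 ≤ ‖s' t‖ * R := by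
      have hmm := mul_le_mul_of_nonneg_left hMs' (norm_nonneg (s' t))
      calc α * ‖s' t‖^2 ≤ ∑ i, ∑ j, s' t i * M t i j * s' t j := hquad
        _ = ∑ i, s' t i * (mApply (M t) (s' t)) i := heqq
        _ ≤ ‖s' t‖ * ‖mApply (M t) (s' t)‖ := hcs2
        _ ≤ ‖s' t‖ * R := hmm
    rcases eq_or_lt_of_le (norm_nonneg (s' t)) with h0 | h0
    · rw [← h0]; positivity
    · rw [le_div_iff₀ hα]
      nlinarith [hfin, h0]
  obtain ⟨Bs', hBs'nn, hBs'⟩ := hs'bound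
  -- the function f = ‖s‖² and its derivative bound
  obtain ⟨f, hf⟩ : ∃ f : ℝ → ℝ, f = fun t => ‖s t‖^2 := ⟨_, rfl⟩
  have hfd : ∀ t, 0 ≤ t → HasDerivAt f (2 * ∑ i, s t i * s' t i) t := by
    intro t ht
    have hfun : f = fun t => ∑ i, s t i * s t i := by
      funext u; rw [hf]; exact norm_sq_eq (s u)
    rw [hfun]
    have h := HasDerivAt.fun_sum (u := Finset.univ)
      (fun i _ => (hcs i t ht).mul (hcs i t ht))
    refine h.congr_deriv ?_
    rw [Finset.mul_sum]
    apply Finset.sum_congr rfl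
    intro i _
    ring
  obtain ⟨L, hL⟩ : ∃ L : ℝ, L = 2 * Bs * Bs' + 1 := ⟨_, rfl⟩
  have hLpos : 0 < L := by rw [hL]; positivity
  have hfd_bound : ∀ t, 0 ≤ t → |2 * ∑ i, s t i * s' t i| ≤ L := by
    intro t ht
    rw [abs_mul]
    have h1 := sum_mul_le_norm (s t) (s' t)
    have h2 : ‖s t‖ * ‖s' t‖ ≤ Bs * Bs' :=
      mul_le_mul (hBs t ht) (hBs' t ht) (norm_nonneg _) hBsnn
    rw [hL]
    have : |(2:ℝ)| = 2 := by norm_num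
    rw [this]
    nlinarith [abs_nonneg (∑ i, s t i * s' t i)]
  -- f is nonneg
  have hfnn : ∀ t, 0 ≤ f t := fun t => by rw [hf]; positivity
  -- drop lemma
  have hdrop : ∀ T, 0 ≤ T → ∀ ε, 0 < ε → ε ≤ f T →
      V (T + ε/(2*L)) ≤ V T - lam * ε * (ε/(2*L)) := by
    intro T hT ε hε hfT
    obtain ⟨δ, hδ⟩ : ∃ d : ℝ, d = ε/(2*L) := ⟨_, rfl⟩
    rw [← hδ]
    have hδpos : 0 < δ := by rw [hδ]; positivity
    have hflow : ∀ u ∈ Set.Icc T (T + δ), ε/2 ≤ f u := by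
      intro u hu
      have hd := le_of_deriv_le (g := fun t => -f t)
        (g' := fun t => -(2 * ∑ i, s t i * s' t i)) (m := L) hu.1
        (fun t htt => (hfd t (le_trans hT htt.1)).neg)
        (fun t htt => by
          have h1 := hfd_bound t (le_trans hT htt.1)
          have h2 := neg_abs_le (2 * ∑ i, s t i * s' t i)
          show -(2 * ∑ i, s t i * s' t i) ≤ L
          linarith)
      have hd' : -f u ≤ -f T + L * (u - T) := hd
      have huT : u - T ≤ δ := by linarith [hu.2]
      have hLδ : L * δ = ε/2 := by
        rw [hδ]; field_simp
      have hh := mul_le_mul_of_nonneg_left huT (le_of_lt hLpos)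
      linarith [hd', hh, hLδ, hfT]
    have hWdrop : ∀ u ∈ Set.Icc T (T + δ), W u ≤ -(lam * ε) := by
      intro u hu
      have h1 := hSK u
      have h2 := hflow u hu
      simp only [hW]
      have : lam * (ε/2) ≤ lam * f u := by
        apply mul_le_mul_of_nonneg_left h2 (le_of_lt hlam)
      rw [hf] at this
      nlinarith
    have := le_of_deriv_le (g := V) (g' := W) (m := -(lam * ε))
      (by linarith : T ≤ T + δ)
      (fun t htt => hVd t (le_trans hT htt.1)) hWdrop
    have heq : T + δ - T = δ := by ring
    rw [heq] at this
    linarith [this]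
  -- f tends to zero
  have hftends : Tendsto f atTop (nhds 0) := by
    rw [Metric.tendsto_atTop]
    by_contra hcon
    push_neg at hcon
    obtain ⟨ε, hε, hcon⟩ := hcon
    have hev : ∀ N : ℝ, ∃ t, N ≤ t ∧ 0 ≤ t ∧ ε ≤ f t := by
      intro N
      obtain ⟨t, ht1, ht2⟩ := hcon (max N 0)
      refine ⟨t, le_trans (le_max_left _ _) ht1, le_trans (le_max_right _ _) ht1, ?_⟩
      rw [Real.dist_eq, sub_zero, abs_of_nonneg (hfnn t)] at ht2
      exact ht2
    obtain ⟨c, hc⟩ : ∃ c : ℝ, c = lam * ε * (ε/(2*L)) := ⟨_, rfl⟩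
    have hcpos : 0 < c := by rw [hc]; positivity
    have hclaim : ∀ m : ℕ, ∃ T, 0 ≤ T ∧ V T ≤ V 0 - m * c := by
      intro m
      induction m with
      | zero => exact ⟨0, le_rfl, by simp⟩
      | succ k ih =>
        obtain ⟨T, hT0, hTV⟩ := ih
        obtain ⟨t, htT, ht0, htf⟩ := hev T
        have hdrop' := hdrop t ht0 ε hε htf
        have hmono := hVle T t hT0 htT
        have hdrop2 : V (t + ε/(2*L)) ≤ V t - c := by
          rw [hc]
          exact hdrop'
        refine ⟨t + ε/(2*L), by positivity, ?_⟩
        push_cast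
        have hexp : ((k:ℝ) + 1) * c = (k:ℝ) * c + c := by ring
        linarith [hexp]
    obtain ⟨m, hm⟩ := exists_nat_gt (V 0 / c)
    obtain ⟨T, hT0, hTV⟩ := hclaim m
    have := hV0 T hT0
    have hmc : V 0 < m * c := by
      rw [div_lt_iff₀ hcpos] at hm
      linarith
    linarith
  -- conclude
  refine ⟨⟨Bs, hBs⟩, ⟨Bθ, hBθ⟩, ?_⟩
  rw [tendsto_zero_iff_norm_tendsto_zero]
  have hsq : Tendsto (fun t => Real.sqrt (f t)) atTop (nhds 0) := by
    have := (Real.continuous_sqrt.tendsto 0).comp hftends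
    simpa [Function.comp_def] using this
  have : (fun t => Real.sqrt (f t)) = fun t => ‖s t‖ := by
    funext t
    rw [hf, Real.sqrt_sq (norm_nonneg _)]
  rwa [this] at hsq
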